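/- Let S = k[[t⁴, t⁵, t¹¹]] ≅ k[[X,Y,Z]]/(Z²−X³Y², Y³−XZ, X⁴−YZ) with maximal ideal m. Then the integral closures of powers of m satisfy: closure(m²) = m² + (t¹¹) and closure(m^n) = m^n for all n ≥ 3. -/

import Mathlib

set_option synthInstance.maxHeartbeats 1000000
set_option maxHeartbeats 2000000

open IsLocalRing Polynomial Finset

variable {R : Type*}

/-- `x` is integral over the ideal `I`: it satisfies an equation
`x^n + a₁ x^{n-1} + ⋯ + aₙ = 0` with `aᵢ ∈ Iⁱ`. -/
def IsIntegralOverIdeal [CommRing R] (I : Ideal R) (x : R) : Prop :=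
  ∃ n : ℕ, 0 < n ∧ ∃ a : ℕ → R, (∀ i ∈ Finset.Icc 1 n, a i ∈ I ^ i) ∧
    x ^ n + ∑ i ∈ Finset.Icc 1 n, a i * x ^ (n - i) = 0

/-- The integral closure of an ideal (the set of integral elements is an ideal,
so the span equals it). -/
def intCl [CommRing R] (I : Ideal R) : Ideal R :=
  Ideal.span {x | IsIntegralOverIdeal I x}

/-- Length of a module, as the Krull dimension of its lattice of submodules. -/
noncomputable def mlen (R M : Type*) [CommRing R] [AddCommGroup M] [Module R M] :
    WithBot ℕ∞ :=
  Order.krullDim (Submodule R M)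

/-- The quotient module `N/(K ∩ N)` for ideals `N K`. -/
abbrev idealQuot [CommRing R] (N K : Ideal R) :=
  N ⧸ (Submodule.comap N.subtype K)

/-- Depth of `M` with respect to the ideal `J`: sup of lengths of `M`-regular
sequences contained in `J`. -/
noncomputable def rdepth (A : Type*) [CommRing A] (J : Ideal A)
    (M : Type*) [AddCommGroup M] [Module A M] : ℕ∞ :=
  sSup {n : ℕ∞ | ∃ rs : List A, (rs.length : ℕ∞) = n ∧ (∀ x ∈ rs, x ∈ J) ∧
    RingTheory.Sequence.IsRegular M rs}

/-- A local ring is Cohen-Macaulay if its depth equals its Krull dimension. -/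
def IsCMLocal (R : Type*) [CommRing R] [IsLocalRing R] : Prop :=
  (rdepth R (maximalIdeal R) R : WithBot ℕ∞) = ringKrullDim R

/-- A local ring is analytically unramified if its `m`-adic completion is reduced. -/
def AnalyticallyUnramified (R : Type*) [CommRing R] [IsLocalRing R] : Prop :=
  IsReduced (AdicCompletion (maximalIdeal R) R)

/-- An ideal is `m`-primary. -/
def IsMPrimary [CommRing R] [IsLocalRing R] (I : Ideal R) : Prop :=
  I.radical = maximalIdeal R

/-- `J ⊆ I` is a minimal reduction: generated by `d = dim R` elements and
`I^{n+1} = J I^n` for `n ≫ 0`. -/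
def IsMinimalReduction [CommRing R] (d : ℕ) (J I : Ideal R) : Prop :=
  J ≤ I ∧ (∃ s : Fin d → R, J = Ideal.span (Set.range s)) ∧
    ∃ N : ℕ, ∀ n ≥ N, I ^ (n + 1) = J * I ^ n

/-- Normal Hilbert data: `L n = λ(R/ intCl(I^{n+1}))` and for `n ≫ 0` this agrees
with the polynomial whose normalized coefficients are the `e i`. -/
def NormalHilbertData [CommRing R] (d : ℕ) (I : Ideal R) (L : ℕ → ℕ) (e : ℕ → ℤ) : Prop :=
  (∀ n, mlen R (R ⧸ intCl (I ^ (n + 1))) = (L n : WithBot ℕ∞)) ∧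
    ∃ N : ℕ, ∀ n ≥ N, (L n : ℤ) =
      ∑ i ∈ Finset.range (d + 1), (-1 : ℤ) ^ i * e i * ((n + d - i).choose (d - i))

/-- `t` is the Cohen-Macaulay type of the local ring `R` of dimension `d`:
`t = λ((Q : m)/Q)` for every ideal `Q` generated by a maximal regular sequence in `m`. -/
def CMTypeData (R : Type*) [CommRing R] [IsLocalRing R] (d t : ℕ) : Prop :=
  ∀ s : List R, s.length = d → (∀ x ∈ s, x ∈ maximalIdeal R) →
    RingTheory.Sequence.IsRegular R s →
      mlen R (idealQuot ((Ideal.span {x | x ∈ s}).colon (maximalIdeal R))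
        (Ideal.span {x | x ∈ s})) = (t : WithBot ℕ∞)

/-- The quotient module `N/(K ∩ N)` for submodules `N K` of a module. -/
abbrev submoduleQuot {A M : Type*} [CommRing A] [AddCommGroup M] [Module A M]
    (N K : Submodule A M) :=
  N ⧸ (Submodule.comap N.subtype K)


namespace SemigroupAux
open Finset



/-- weight of an exponent: 4 e₀ + 5 e₁ + 11 e₂ -/
def wt3 (e : Fin 3 →₀ ℕ) : ℕ := 4 * e 0 + 5 * e 1 + 11 * e 2

lemma wt3_add (a b : Fin 3 →₀ ℕ) : wt3 (a + b) = wt3 a + wt3 b := by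
  simp [wt3, Finsupp.add_apply]; ring

lemma wt3_zero : wt3 0 = 0 := by simp [wt3]

lemma eq_zero_of_wt3 {e : Fin 3 →₀ ℕ} (h : wt3 e = 0) : e = 0 := by
  unfold wt3 at h
  ext i
  fin_cases i <;> simp <;> omega

/-- the finset of exponents of weight `n` -/
noncomputable def Ewt (n : ℕ) : Finset (Fin 3 →₀ ℕ) :=
  (Finset.Iic (Finsupp.equivFunOnFinite.symm fun _ => n)).filter (fun e => wt3 e = n)

lemma mem_Ewt {n : ℕ} {e : Fin 3 →₀ ℕ} : e ∈ Ewt n ↔ wt3 e = n := by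
  constructor
  · intro h; exact (Finset.mem_filter.mp h).2
  · intro h
    refine Finset.mem_filter.mpr ⟨Finset.mem_Iic.mpr ?_, h⟩
    rw [Finsupp.le_def]
    intro i
    have : 4 * e 0 + 5 * e 1 + 11 * e 2 = n := h
    have h0 : e 0 ≤ n := by omega
    have h1 : e 1 ≤ n := by omega
    have h2 : e 2 ≤ n := by omega
    fin_cases i <;> simpa

variable {k : Type*} [CommRing k]

open MvPowerSeries in
/-- The substitution `Xᵢ ↦ t^{wᵢ}` as a ring hom to power series. -/
noncomputable def sigma3 : MvPowerSeries (Fin 3) k →+* PowerSeries k where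
  toFun F := PowerSeries.mk fun n => ∑ e ∈ Ewt n, MvPowerSeries.coeff e F
  map_one' := by
    ext n
    simp only [PowerSeries.coeff_mk, MvPowerSeries.coeff_one, PowerSeries.coeff_one]
    rw [Finset.sum_ite_eq' (Ewt n) (0 : Fin 3 →₀ ℕ) (fun _ => (1:k))]
    by_cases h : n = 0
    · subst h
      rw [if_pos (mem_Ewt.mpr wt3_zero), if_pos rfl]
    · rw [if_neg, if_neg h
      ]
      intro hc
      exact h ((mem_Ewt.mp hc).symm.trans wt3_zero)
  map_zero' := by
    ext n; simp [PowerSeries.coeff_mk]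
  map_add' F G := by
    ext n
    simp [PowerSeries.coeff_mk, Finset.sum_add_distrib]
  map_mul' F G := by
    classical
    ext n
    rw [PowerSeries.coeff_mk]
    rw [PowerSeries.coeff_mul]
    simp only [MvPowerSeries.coeff_mul, PowerSeries.coeff_mk]
    rw [Finset.sum_sigma']
    simp only [Finset.sum_mul_sum, ← Finset.sum_product']
    rw [Finset.sum_sigma']
    apply Finset.sum_nbij' (fun ⟨e, (u, v)⟩ => (⟨(wt3 u, wt3 v), (u, v)⟩ :
        (_ : ℕ × ℕ) × ((Fin 3 →₀ ℕ) × (Fin 3 →₀ ℕ))))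
      (fun ⟨_, (u, v)⟩ => ⟨u + v, (u, v)⟩)
    · rintro ⟨e, u, v⟩ h
      simp only [Finset.mem_sigma, mem_Ewt, Finset.HasAntidiagonal.mem_antidiagonal,
        Finset.HasAntidiagonal.mem_antidiagonal, Finset.mem_product] at h ⊢
      obtain ⟨h1, h2⟩ := h
      refine ⟨by rw [← h1, ← h2, wt3_add], trivial, trivial⟩
    · rintro ⟨⟨a, b⟩, u, v⟩ h
      simp only [Finset.mem_sigma, mem_Ewt, Finset.HasAntidiagonal.mem_antidiagonal,
        Finset.HasAntidiagonal.mem_antidiagonal, Finset.mem_product] at h ⊢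
      obtain ⟨h1, h2, h3⟩ := h
      refine ⟨by rw [wt3_add, h2, h3, h1], trivial⟩
    · rintro ⟨e, u, v⟩ h
      simp only [Finset.mem_sigma, mem_Ewt, Finset.HasAntidiagonal.mem_antidiagonal] at h
      simp [h.2]
    · rintro ⟨⟨a, b⟩, u, v⟩ h
      simp only [Finset.mem_sigma, mem_Ewt, Finset.HasAntidiagonal.mem_antidiagonal,
        Finset.mem_product] at h
      simp [h.2.1, h.2.2]
    · rintro ⟨e, u, v⟩ _
      rfl

lemma sigma3_monomial (e : Fin 3 →₀ ℕ) (a : k) :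
    sigma3 (MvPowerSeries.monomial (R := k) e a) = PowerSeries.monomial (R := k) (wt3 e) a := by
  ext n
  rw [show ((sigma3 (MvPowerSeries.monomial (R := k) e a)) : PowerSeries k)
      = PowerSeries.mk fun n => ∑ e' ∈ Ewt n, MvPowerSeries.coeff e' (MvPowerSeries.monomial (R := k) e a) from rfl]
  classical
  rw [PowerSeries.coeff_mk, PowerSeries.coeff_monomial]
  simp only [MvPowerSeries.coeff_monomial]
  rw [Finset.sum_ite_eq' (Ewt n) e fun _ => a]
  by_cases h : n = wt3 e
  · rw [if_pos (mem_Ewt.mpr h.symm), if_pos h]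
  · rw [if_neg (fun hc => h (mem_Ewt.mp hc).symm), if_neg h]

lemma sigma3_C (a : k) : sigma3 ((MvPowerSeries.C (σ := Fin 3) (R := k)) a) = PowerSeries.C (R := k) a := by
  have h := sigma3_monomial (0 : Fin 3 →₀ ℕ) a
  rw [wt3_zero] at h
  rw [← MvPowerSeries.monomial_zero_eq_C_apply, h, PowerSeries.monomial_zero_eq_C_apply]

lemma wt3_single_0 : wt3 (Finsupp.single (0 : Fin 3) 1) = 4 := by
  simp [wt3, Finsupp.single_apply]
lemma wt3_single_1 : wt3 (Finsupp.single (1 : Fin 3) 1) = 5 := by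
  simp [wt3, Finsupp.single_apply]
lemma wt3_single_2 : wt3 (Finsupp.single (2 : Fin 3) 1) = 11 := by
  simp [wt3, Finsupp.single_apply]

lemma sigma3_X0 : sigma3 (MvPowerSeries.X 0 : MvPowerSeries (Fin 3) k) = PowerSeries.X ^ 4 := by
  rw [MvPowerSeries.X, sigma3_monomial, wt3_single_0, PowerSeries.X_pow_eq]
lemma sigma3_X1 : sigma3 (MvPowerSeries.X 1 : MvPowerSeries (Fin 3) k) = PowerSeries.X ^ 5 := by
  rw [MvPowerSeries.X, sigma3_monomial, wt3_single_1, PowerSeries.X_pow_eq]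
lemma sigma3_X2 : sigma3 (MvPowerSeries.X 2 : MvPowerSeries (Fin 3) k) = PowerSeries.X ^ 11 := by
  rw [MvPowerSeries.X, sigma3_monomial, wt3_single_2, PowerSeries.X_pow_eq]

variable {k : Type*} [CommRing k]

lemma finsupp3_eq_zero {m : Fin 3 →₀ ℕ} (h0 : m 0 = 0) (h1 : m 1 = 0) (h2 : m 2 = 0) :
    m = 0 := by
  ext i; fin_cases i <;> simpa

/-- every multivariate power series in 3 variables splits off its constant and
one factor of each variable -/
lemma split_step (F : MvPowerSeries (Fin 3) k) :
    ∃ (c : k) (G0 G1 G2 : MvPowerSeries (Fin 3) k),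
      F = (MvPowerSeries.C (σ := Fin 3) (R := k)) c + MvPowerSeries.X 0 * G0
        + MvPowerSeries.X 1 * G1 + MvPowerSeries.X 2 * G2 := by
  classical
  set A : MvPowerSeries (Fin 3) k :=
    fun e => if e 0 ≠ 0 then MvPowerSeries.coeff e F else 0 with hA
  set B : MvPowerSeries (Fin 3) k :=
    fun e => if e 0 = 0 ∧ e 1 ≠ 0 then MvPowerSeries.coeff e F else 0 with hB
  set Cp : MvPowerSeries (Fin 3) k :=
    fun e => if e 0 = 0 ∧ e 1 = 0 ∧ e 2 ≠ 0 then MvPowerSeries.coeff e F else 0 with hCp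
  have hcA : ∀ m, MvPowerSeries.coeff m A
      = if m 0 ≠ 0 then MvPowerSeries.coeff m F else 0 := fun m => rfl
  have hcB : ∀ m, MvPowerSeries.coeff m B
      = if m 0 = 0 ∧ m 1 ≠ 0 then MvPowerSeries.coeff m F else 0 := fun m => rfl
  have hcC : ∀ m, MvPowerSeries.coeff m Cp
      = if m 0 = 0 ∧ m 1 = 0 ∧ m 2 ≠ 0 then MvPowerSeries.coeff m F else 0 := fun m => rfl
  obtain ⟨G0, hG0⟩ : (MvPowerSeries.X 0 : MvPowerSeries (Fin 3) k) ∣ A :=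
    MvPowerSeries.X_dvd_iff.mpr fun m hm => by rw [hcA, if_neg (by simpa using hm)]
  obtain ⟨G1, hG1⟩ : (MvPowerSeries.X 1 : MvPowerSeries (Fin 3) k) ∣ B :=
    MvPowerSeries.X_dvd_iff.mpr fun m hm => by
      rw [hcB, if_neg]; rintro ⟨-, h⟩; exact h hm
  obtain ⟨G2, hG2⟩ : (MvPowerSeries.X 2 : MvPowerSeries (Fin 3) k) ∣ Cp :=
    MvPowerSeries.X_dvd_iff.mpr fun m hm => by
      rw [hcC, if_neg]; rintro ⟨-, -, h⟩; exact h hm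
  refine ⟨MvPowerSeries.constantCoeff (σ := Fin 3) (R := k) F, G0, G1, G2, ?_⟩
  rw [← hG0, ← hG1, ← hG2]
  ext m
  rw [map_add, map_add, map_add, hcA, hcB, hcC, MvPowerSeries.coeff_C]
  by_cases h0 : m 0 = 0 <;> by_cases h1 : m 1 = 0 <;> by_cases h2 : m 2 = 0 <;>
    simp only [h0, h1, h2, ne_eq, not_true_eq_false, not_false_eq_true, if_true, if_false,
      true_and, false_and, and_true, and_false, if_neg, ite_true, ite_false]
  · have hm : m = 0 := finsupp3_eq_zero h0 h1 h2
    subst hm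
    simp [MvPowerSeries.coeff_zero_eq_constantCoeff]
  · rw [if_neg (fun h => h2 (by rw [h]; rfl))]; ring
  · rw [if_neg (fun h => h1 (by rw [h]; rfl))]; ring
  · rw [if_neg (fun h => h1 (by rw [h]; rfl))]; ring
  · rw [if_neg (fun h => h0 (by rw [h]; rfl))]; ring
  · rw [if_neg (fun h => h0 (by rw [h]; rfl))]; ring
  · rw [if_neg (fun h => h0 (by rw [h]; rfl))]; ring
  · rw [if_neg (fun h => h0 (by rw [h]; rfl))]; ring


/-- integral equation over `(PowerSeries.X^d)` forces divisibility by `PowerSeries.X^d` -/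
lemma X_pow_dvd_of_integral {k : Type*} [Field k] (u : PowerSeries k) (d N : ℕ) (hN : 0 < N)
    (a : ℕ → PowerSeries k) (ha : ∀ i ∈ Finset.Icc 1 N, (PowerSeries.X : PowerSeries k) ^ (d * i) ∣ a i)
    (heq : u ^ N + ∑ i ∈ Finset.Icc 1 N, a i * u ^ (N - i) = 0) :
    (PowerSeries.X : PowerSeries k) ^ d ∣ u := by
  suffices h : ∀ j, j ≤ d → (PowerSeries.X : PowerSeries k) ^ j ∣ u from h d le_rfl
  intro j
  induction j with
  | zero => intro _; simp
  | succ j ih =>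
    intro hj
    obtain ⟨w, rfl⟩ := ih (by omega)
    have hc : PowerSeries.constantCoeff (R := k) w = 0 := by
      have hcoeff := congrArg (PowerSeries.coeff (R := k) (j * N)) heq
      rw [map_add, map_sum, map_zero] at hcoeff
      have h1 : PowerSeries.coeff (R := k) (j * N) (((PowerSeries.X : PowerSeries k) ^ j * w) ^ N)
          = (PowerSeries.constantCoeff (R := k) w) ^ N := by
        rw [mul_pow, ← pow_mul]
        have h := PowerSeries.coeff_X_pow_mul (w ^ N) (j * N) 0
        rw [zero_add] at h
        rw [h, PowerSeries.coeff_zero_eq_constantCoeff, map_pow]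
      have h2 : ∀ i ∈ Finset.Icc 1 N,
          PowerSeries.coeff (R := k) (j * N) (a i * ((PowerSeries.X : PowerSeries k) ^ j * w) ^ (N - i)) = 0 := by
        intro i hi
        obtain ⟨hi1, hi2⟩ := Finset.mem_Icc.mp hi
        have hd : (PowerSeries.X : PowerSeries k) ^ (d * i + j * (N - i))
            ∣ a i * ((PowerSeries.X : PowerSeries k) ^ j * w) ^ (N - i) := by
          rw [pow_add]
          exact mul_dvd_mul (ha i hi)
            (by rw [mul_pow, ← pow_mul]; exact dvd_mul_right _ _)
        have hlt : j * N < d * i + j * (N - i) := by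
          have hs : N - i + i = N := Nat.sub_add_cancel hi2
          have h3 : j * (N - i) + j * i = j * N := by rw [← Nat.mul_add, hs]
          have h4 : j * i < d * i := by
            apply Nat.mul_lt_mul_of_lt_of_le (by omega) le_rfl (by omega)
          omega
        exact (PowerSeries.X_pow_dvd_iff.mp hd) _ hlt
      rw [Finset.sum_eq_zero h2, h1, add_zero] at hcoeff
      exact pow_eq_zero_iff hN.ne' |>.mp hcoeff
    obtain ⟨w', rfl⟩ := PowerSeries.X_dvd_iff.mpr hc
    exact ⟨w', by ring⟩

section Nf
variable {S : Type*} [CommRing S] (x y z : S)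

/-- the normal-form monomial of value `v` in the semigroup ring -/
def Nf (v : ℕ) : S :=
  if v % 4 = 0 then x ^ (v / 4)
  else if v % 4 = 1 then x ^ ((v - 5) / 4) * y
  else if v % 4 = 2 then x ^ ((v - 10) / 4) * y ^ 2
  else x ^ ((v - 11) / 4) * z

/-- values realizable with the right residue -/
def Good (v : ℕ) : Prop :=
  v % 4 = 0 ∨ (v % 4 = 1 ∧ 5 ≤ v) ∨ (v % 4 = 2 ∧ 10 ≤ v) ∨ (v % 4 = 3 ∧ 11 ≤ v)

instance : DecidablePred Good := fun v => by unfold Good; infer_instance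

lemma good_val (a b c : ℕ) : Good (4 * a + 5 * b + 11 * c) := by
  unfold Good
  by_cases h0 : (4 * a + 5 * b + 11 * c) % 4 = 0
  · exact Or.inl h0
  by_cases h1 : (4 * a + 5 * b + 11 * c) % 4 = 1
  · exact Or.inr (Or.inl ⟨h1, by omega⟩)
  by_cases h2 : (4 * a + 5 * b + 11 * c) % 4 = 2
  · exact Or.inr (Or.inr (Or.inl ⟨h2, by omega⟩))
  · exact Or.inr (Or.inr (Or.inr ⟨by omega, by omega⟩))

lemma Nf_four (a : ℕ) : Nf x y z (4 * a) = x ^ a := by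
  unfold Nf; rw [if_pos (by omega), show 4 * a / 4 = a by omega]

lemma Nf_five (a : ℕ) : Nf x y z (4 * a + 5) = x ^ a * y := by
  unfold Nf
  rw [if_neg (by omega), if_pos (by omega), show (4 * a + 5 - 5) / 4 = a by omega]

lemma Nf_ten (a : ℕ) : Nf x y z (4 * a + 10) = x ^ a * y ^ 2 := by
  unfold Nf
  rw [if_neg (by omega), if_neg (by omega), if_pos (by omega),
    show (4 * a + 10 - 10) / 4 = a by omega]

lemma Nf_eleven (a : ℕ) : Nf x y z (4 * a + 11) = x ^ a * z := by
  unfold Nf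
  rw [if_neg (by omega), if_neg (by omega), if_neg (by omega),
    show (4 * a + 11 - 11) / 4 = a by omega]

lemma Nf_norm (h1 : z ^ 2 = x ^ 3 * y ^ 2) (h2 : y ^ 3 = x * z) (h3 : x ^ 4 = y * z) :
    ∀ μ a b c, 5 * b + 11 * c ≤ μ → x ^ a * y ^ b * z ^ c = Nf x y z (4 * a + 5 * b + 11 * c) := by
  intro μ
  induction μ with
  | zero =>
    intro a b c h
    obtain ⟨rfl, rfl⟩ : b = 0 ∧ c = 0 := by omega
    rw [show 4 * a + 5 * 0 + 11 * 0 = 4 * a by ring, Nf_four]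
    simp
  | succ μ ih =>
    intro a b c h
    by_cases hc2 : 2 ≤ c
    · obtain ⟨c', rfl⟩ : ∃ c', c = c' + 2 := ⟨c - 2, by omega⟩
      have key : x ^ a * y ^ b * z ^ (c' + 2) = x ^ (a + 3) * y ^ (b + 2) * z ^ c' := by
        have e1 : x ^ a * y ^ b * z ^ (c' + 2) = x ^ a * y ^ b * z ^ c' * z ^ 2 := by ring
        rw [e1, h1]; ring
      rw [key, ih (a + 3) (b + 2) c' (by omega)]
      congr 1; ring
    · by_cases hc1 : c = 1
      · subst hc1
        by_cases hb : 1 ≤ b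
        · obtain ⟨b', rfl⟩ : ∃ b', b = b' + 1 := ⟨b - 1, by omega⟩
          have key : x ^ a * y ^ (b' + 1) * z ^ 1 = x ^ (a + 4) * y ^ b' * z ^ 0 := by
            have e1 : x ^ a * y ^ (b' + 1) * z ^ 1 = x ^ a * y ^ b' * (y * z) := by ring
            rw [e1, ← h3]; ring
          rw [key, ih (a + 4) b' 0 (by omega)]
          congr 1; ring
        · obtain rfl : b = 0 := by omega
          rw [show 4 * a + 5 * 0 + 11 * 1 = 4 * a + 11 by ring, Nf_eleven]
          simp
      · obtain rfl : c = 0 := by omega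
        by_cases hb3 : 3 ≤ b
        · obtain ⟨b', rfl⟩ : ∃ b', b = b' + 3 := ⟨b - 3, by omega⟩
          have key : x ^ a * y ^ (b' + 3) * z ^ 0 = x ^ (a + 1) * y ^ b' * z ^ 1 := by
            have e1 : x ^ a * y ^ (b' + 3) * z ^ 0 = x ^ a * y ^ b' * y ^ 3 := by ring
            rw [e1, h2]; ring
          rw [key, ih (a + 1) b' 1 (by omega)]
          congr 1; ring
        · interval_cases b
          · rw [show 4 * a + 5 * 0 + 11 * 0 = 4 * a by ring, Nf_four]; simp
          · rw [show 4 * a + 5 * 1 + 11 * 0 = 4 * a + 5 by ring, Nf_five]; simp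
          · rw [show 4 * a + 5 * 2 + 11 * 0 = 4 * a + 10 by ring, Nf_ten]; simp

lemma map_Nf {T : Type*} [CommRing T] (g : S →+* T) (t : T)
    (hgx : g x = t ^ 4) (hgy : g y = t ^ 5) (hgz : g z = t ^ 11)
    {v : ℕ} (hv : Good v) : g (Nf x y z v) = t ^ v := by
  unfold Nf
  by_cases h0 : v % 4 = 0
  · rw [if_pos h0, map_pow, hgx, ← pow_mul]; congr 1; omega
  by_cases hr1 : v % 4 = 1
  · have h5 : 5 ≤ v := by unfold Good at hv; omega
    rw [if_neg h0, if_pos hr1, map_mul, map_pow, hgx, hgy, ← pow_mul, ← pow_add]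
    congr 1; omega
  by_cases hr2 : v % 4 = 2
  · have h10 : 10 ≤ v := by unfold Good at hv; omega
    rw [if_neg h0, if_neg hr1, if_pos hr2, map_mul, map_pow, map_pow, hgx, hgy,
      ← pow_mul, ← pow_mul, ← pow_add]
    congr 1; omega
  · have h11 : 11 ≤ v := by unfold Good at hv; omega
    have hr3 : v % 4 = 3 := by omega
    rw [if_neg h0, if_neg hr1, if_neg hr2, map_mul, map_pow, hgx, hgz, ← pow_mul, ← pow_add]
    congr 1; omega

variable {m : Ideal S} (hxm : x ∈ m) (hym : y ∈ m) (hzm : z ∈ m)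

include hxm hym hzm in
lemma monomial_mem_pow (n a b c : ℕ) (h : n ≤ a + b + c) : x ^ a * y ^ b * z ^ c ∈ m ^ n := by
  apply Ideal.pow_le_pow_right h
  have h1 : x ^ a * y ^ b * z ^ c ∈ m ^ a * m ^ b * m ^ c :=
    Ideal.mul_mem_mul (Ideal.mul_mem_mul (Ideal.pow_mem_pow hxm a) (Ideal.pow_mem_pow hym b))
      (Ideal.pow_mem_pow hzm c)
  rwa [← pow_add, ← pow_add] at h1

include hxm hym hzm in
lemma Nf_mem_pow (hy3 : y ^ 3 = x * z) (n : ℕ) (hn : 3 ≤ n) {v : ℕ} (hv : Good v)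
    (h4n : 4 * n ≤ v) : Nf x y z v ∈ m ^ n := by
  unfold Nf
  by_cases h0 : v % 4 = 0
  · rw [if_pos h0]
    have := monomial_mem_pow x y z hxm hym hzm n (v / 4) 0 0 (by omega)
    simpa using this
  by_cases hr1 : v % 4 = 1
  · rw [if_neg h0, if_pos hr1]
    have := monomial_mem_pow x y z hxm hym hzm n ((v - 5) / 4) 1 0 (by omega)
    simpa using this
  by_cases hr2 : v % 4 = 2
  · rw [if_neg h0, if_neg hr1, if_pos hr2]
    have := monomial_mem_pow x y z hxm hym hzm n ((v - 10) / 4) 2 0 (by omega)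
    simpa using this
  · rw [if_neg h0, if_neg hr1, if_neg hr2]
    have hr3 : v % 4 = 3 := by omega
    obtain ⟨a', ha'⟩ : ∃ a', (v - 11) / 4 = a' + 1 := ⟨(v - 11) / 4 - 1, by omega⟩
    rw [ha']
    have key : x ^ (a' + 1) * z = x ^ a' * y ^ 3 * z ^ 0 := by
      have e1 : x ^ (a' + 1) * z = x ^ a' * (x * z) := by ring
      rw [e1, ← hy3]; ring
    rw [key]
    exact monomial_mem_pow x y z hxm hym hzm n a' 3 0 (by omega)

include hxm hym hzm in
lemma Nf_mem_two {v : ℕ} (hv : Good v) (h8 : 8 ≤ v) :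
    Nf x y z v ∈ m ^ 2 ⊔ Ideal.span {z} := by
  unfold Nf
  by_cases h0 : v % 4 = 0
  · rw [if_pos h0]
    apply Ideal.mem_sup_left
    have := monomial_mem_pow x y z hxm hym hzm 2 (v / 4) 0 0 (by omega)
    simpa using this
  by_cases hr1 : v % 4 = 1
  · rw [if_neg h0, if_pos hr1]
    apply Ideal.mem_sup_left
    have := monomial_mem_pow x y z hxm hym hzm 2 ((v - 5) / 4) 1 0 (by omega)
    simpa using this
  by_cases hr2 : v % 4 = 2
  · rw [if_neg h0, if_neg hr1, if_pos hr2]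
    apply Ideal.mem_sup_left
    have := monomial_mem_pow x y z hxm hym hzm 2 ((v - 10) / 4) 2 0 (by omega)
    simpa using this
  · rw [if_neg h0, if_neg hr1, if_neg hr2]
    have hr3 : v % 4 = 3 := by omega
    by_cases hv11 : v = 11
    · subst hv11
      simp only [show (11 - 11) / 4 = 0 by norm_num, pow_zero, one_mul]
      exact Ideal.mem_sup_right (Ideal.subset_span rfl)
    · have h15 : 15 ≤ v := by omega
      apply Ideal.mem_sup_left
      obtain ⟨a', ha'⟩ : ∃ a', (v - 11) / 4 = a' + 1 := ⟨(v - 11) / 4 - 1, by omega⟩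
      rw [ha', pow_two]
      exact Ideal.mul_mem_mul (by rw [pow_succ]; exact Ideal.mul_mem_left _ _ hxm) hzm

end Nf

lemma span_image_rep {R M : Type*} [Semiring R] [AddCommMonoid M] [Module R M]
    (g : ℕ → M) (V : Finset ℕ) {u : M} (hu : u ∈ Submodule.span R (g '' ↑V)) :
    ∃ c : ℕ → R, u = ∑ v ∈ V, c v • g v := by
  classical
  induction hu using Submodule.span_induction with
  | mem w hw =>
    obtain ⟨v, hv, rfl⟩ := hw
    refine ⟨fun v' => if v' = v then 1 else 0, ?_⟩
    have : ∀ v' ∈ V, (if v' = v then (1:R) else 0) • g v'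
        = if v' = v then g v' else 0 := by
      intro v' _; split <;> simp
    rw [Finset.sum_congr rfl this, Finset.sum_ite_eq' V v g, if_pos (by exact_mod_cast hv)]
  | zero => exact ⟨0, by simp⟩
  | add a b _ _ iha ihb =>
    obtain ⟨ca, rfl⟩ := iha
    obtain ⟨cb, rfl⟩ := ihb
    exact ⟨ca + cb, by simp [add_smul, Finset.sum_add_distrib]⟩
  | smul r a _ iha =>
    obtain ⟨ca, rfl⟩ := iha
    exact ⟨fun v => r * ca v, by simp [mul_smul, Finset.smul_sum]⟩

end SemigroupAux

/- The semigroup ring `k[[t⁴,t⁵,t¹¹]] ≅ k[[X,Y,Z]]/(Z²−X³Y², Y³−XZ, X⁴−YZ)`,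
presented as the displayed quotient; `x, y, z` are the images of `X, Y, Z`
(corresponding to `t⁴, t⁵, t¹¹`), and `m = (x,y,z)` is the maximal ideal. -/
theorem normal_powers_of_semigroup_ring
    (k : Type*) [Field k]
    (S : Type*) [CommRing S]
    (f : MvPowerSeries (Fin 3) k →+* S)
    (hf : Function.Surjective f)
    (hker : RingHom.ker f = Ideal.span
      ({ (MvPowerSeries.X 2) ^ 2 - (MvPowerSeries.X 0) ^ 3 * (MvPowerSeries.X 1) ^ 2,
         (MvPowerSeries.X 1) ^ 3 - (MvPowerSeries.X 0) * (MvPowerSeries.X 2),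
         (MvPowerSeries.X 0) ^ 4 - (MvPowerSeries.X 1) * (MvPowerSeries.X 2) } :
        Set (MvPowerSeries (Fin 3) k)))
    (x y z : S)
    (hx : x = f (MvPowerSeries.X 0)) (hy : y = f (MvPowerSeries.X 1))
    (hz : z = f (MvPowerSeries.X 2))
    (m : Ideal S) (hm : m = Ideal.span {x, y, z})
    (hmax : ∀ u : S, u ∈ m ↔ ¬ IsUnit u) :
    intCl (m ^ 2) = m ^ 2 ⊔ Ideal.span {z} ∧
      ∀ n : ℕ, 3 ≤ n → intCl (m ^ n) = m ^ n := by
  classical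
  clear hmax
  letI : Algebra k S := (f.comp ((MvPowerSeries.C (σ := Fin 3) (R := k)))).toAlgebra
  have halgmap : ∀ c : k, algebraMap k S c = f ((MvPowerSeries.C (σ := Fin 3) (R := k)) c) := fun c => rfl
  -- the relations hold in S
  have hker' : ∀ p ∈ ({ (MvPowerSeries.X 2) ^ 2 - (MvPowerSeries.X 0) ^ 3 * (MvPowerSeries.X 1) ^ 2,
         (MvPowerSeries.X 1) ^ 3 - (MvPowerSeries.X 0) * (MvPowerSeries.X 2),
         (MvPowerSeries.X 0) ^ 4 - (MvPowerSeries.X 1) * (MvPowerSeries.X 2) } :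
        Set (MvPowerSeries (Fin 3) k)), f p = 0 := by
    intro p hp
    rw [← RingHom.mem_ker, hker]
    exact Ideal.subset_span hp
  have hz2 : z ^ 2 = x ^ 3 * y ^ 2 := by
    have h := hker' _ (Set.mem_insert _ _)
    rw [map_sub, map_pow, map_mul, map_pow, map_pow] at h
    rw [hx, hy, hz]
    exact sub_eq_zero.mp h
  have hy3 : y ^ 3 = x * z := by
    have h := hker' _ (Set.mem_insert_of_mem _ (Set.mem_insert _ _))
    rw [map_sub, map_pow, map_mul] at h
    rw [hx, hy, hz]
    exact sub_eq_zero.mp h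
  have hx4 : x ^ 4 = y * z := by
    have h := hker' _ (Set.mem_insert_of_mem _ (Set.mem_insert_of_mem _ rfl))
    rw [map_sub, map_pow, map_mul] at h
    rw [hx, hy, hz]
    exact sub_eq_zero.mp h
  have hxm : x ∈ m := by rw [hm]; exact Ideal.subset_span (by simp)
  have hym : y ∈ m := by rw [hm]; exact Ideal.subset_span (by simp)
  have hzm : z ∈ m := by rw [hm]; exact Ideal.subset_span (by simp)
  -- the valuation map to k[[t]]
  have hkg : ∀ p ∈ RingHom.ker f, (SemigroupAux.sigma3 p : PowerSeries k) = 0 := by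
    intro p hp
    rw [hker] at hp
    have hle : Ideal.span ({ (MvPowerSeries.X 2) ^ 2 - (MvPowerSeries.X 0) ^ 3 * (MvPowerSeries.X 1) ^ 2,
         (MvPowerSeries.X 1) ^ 3 - (MvPowerSeries.X 0) * (MvPowerSeries.X 2),
         (MvPowerSeries.X 0) ^ 4 - (MvPowerSeries.X 1) * (MvPowerSeries.X 2) } :
        Set (MvPowerSeries (Fin 3) k)) ≤
        RingHom.ker (SemigroupAux.sigma3 (k := k)) := by
      rw [Ideal.span_le]
      rintro q (rfl | rfl | rfl) <;>
        · rw [SetLike.mem_coe, RingHom.mem_ker]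
          simp only [map_sub, map_pow, map_mul, SemigroupAux.sigma3_X0,
            SemigroupAux.sigma3_X1, SemigroupAux.sigma3_X2]
          ring
    exact RingHom.mem_ker.mp (hle hp)
  set g : S →+* PowerSeries k :=
    (Ideal.Quotient.lift (RingHom.ker f) SemigroupAux.sigma3 hkg).comp
      ((RingHom.quotientKerEquivOfSurjective hf).symm : S ≃+* _).toRingHom with hgdef
  have hgf : ∀ F, g (f F) = SemigroupAux.sigma3 F := by
    intro F
    have h1 : (RingHom.quotientKerEquivOfSurjective hf).symm (f F)
        = Ideal.Quotient.mk (RingHom.ker f) F := by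
      apply (RingHom.quotientKerEquivOfSurjective hf).injective
      rw [RingEquiv.apply_symm_apply]
      exact (RingHom.kerLift_mk f F).symm
    show (Ideal.Quotient.lift _ _ hkg) ((RingHom.quotientKerEquivOfSurjective hf).symm (f F)) = _
    rw [h1, Ideal.Quotient.lift_mk]
  have hgx : g x = PowerSeries.X ^ 4 := by rw [hx, hgf, SemigroupAux.sigma3_X0]
  have hgy : g y = PowerSeries.X ^ 5 := by rw [hy, hgf, SemigroupAux.sigma3_X1]
  have hgz : g z = PowerSeries.X ^ 11 := by rw [hz, hgf, SemigroupAux.sigma3_X2]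
  have hgC : ∀ c : k, g (algebraMap k S c) = PowerSeries.C (R := k) c := fun c => by
    rw [halgmap, hgf, SemigroupAux.sigma3_C]
  -- power of the maximal ideal maps into (X^{4i})
  have hgpow : ∀ (i : ℕ) (s : S), s ∈ m ^ i → (PowerSeries.X : PowerSeries k) ^ (4 * i) ∣ g s := by
    intro i s hs
    have h1 : Ideal.map g (m ^ i) ≤ Ideal.span {(PowerSeries.X : PowerSeries k) ^ (4 * i)} := by
      rw [Ideal.map_pow, hm, Ideal.map_span, Set.image_insert_eq, Set.image_insert_eq,
        Set.image_singleton, hgx, hgy, hgz]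
      calc (Ideal.span {(PowerSeries.X : PowerSeries k) ^ 4, PowerSeries.X ^ 5,
              PowerSeries.X ^ 11}) ^ i
          ≤ (Ideal.span {(PowerSeries.X : PowerSeries k) ^ 4}) ^ i := by
            apply Ideal.pow_right_mono
            rw [Ideal.span_le]
            intro q hq
            rw [SetLike.mem_coe, Ideal.mem_span_singleton]
            rcases hq with rfl | rfl | hq
            · exact dvd_rfl
            · exact pow_dvd_pow _ (by norm_num)
            · rw [Set.mem_singleton_iff] at hq; subst hq; exact pow_dvd_pow _ (by norm_num)
        _ = Ideal.span {(PowerSeries.X : PowerSeries k) ^ (4 * i)} := by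
            rw [Ideal.span_singleton_pow, ← pow_mul]
    exact Ideal.mem_span_singleton.mp (h1 (Ideal.mem_map_of_mem g hs))
  -- elements integral over m^n map into (X^{4n})
  have hintg : ∀ (n : ℕ) (s : S), IsIntegralOverIdeal (m ^ n) s →
      (PowerSeries.X : PowerSeries k) ^ (4 * n) ∣ g s := by
    rintro n s ⟨N, hN, a, ha, heq⟩
    apply SemigroupAux.X_pow_dvd_of_integral (g s) (4 * n) N hN (fun i => g (a i))
    · intro i hi
      have h1 : a i ∈ m ^ (n * i) := by
        have h2 := ha i hi
        rwa [← pow_mul] at h2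
      have h3 := hgpow (n * i) (a i) h1
      rwa [show 4 * (n * i) = 4 * n * i by ring] at h3
    · have h2 := congrArg g heq
      rw [map_add, map_pow, map_sum, map_zero] at h2
      simp only [map_mul, map_pow] at h2
      exact h2
  -- the k-span of all monomials
  set W : Submodule k S := Submodule.span k {s : S | ∃ a b c : ℕ, s = x ^ a * y ^ b * z ^ c}
    with hW
  have hone : (1 : S) ∈ W := Submodule.subset_span ⟨0, 0, 0, by simp⟩
  have hmulW : ∀ t ∈ ({x, y, z} : Set S), ∀ u ∈ W, t * u ∈ W := by
    intro t ht u hu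
    induction hu using Submodule.span_induction with
    | mem w hw =>
      obtain ⟨a, b, c, rfl⟩ := hw
      apply Submodule.subset_span
      rcases ht with rfl | rfl | rfl
      · exact ⟨a + 1, b, c, by ring⟩
      · exact ⟨a, b + 1, c, by ring⟩
      · exact ⟨a, b, c + 1, by ring⟩
    | zero => rw [mul_zero]; exact W.zero_mem
    | add u v _ _ ihu ihv => rw [mul_add]; exact add_mem ihu ihv
    | smul r u _ ihu => rw [mul_smul_comm]; exact Submodule.smul_mem _ r ihu
  -- every element of S decomposes as k-combination of monomials plus m^D
  have hdec : ∀ (D : ℕ) (F : MvPowerSeries (Fin 3) k),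
      f F ∈ W ⊔ (m ^ D).restrictScalars k := by
    intro D
    induction D with
    | zero =>
      intro F
      apply Submodule.mem_sup_right
      show f F ∈ (m ^ 0 : Ideal S)
      simp
    | succ D ih =>
      intro F
      obtain ⟨c, G0, G1, G2, rfl⟩ := SemigroupAux.split_step F
      rw [map_add, map_add, map_add, map_mul, map_mul, map_mul, ← hx, ← hy, ← hz, ← halgmap]
      have hstep : ∀ t ∈ ({x, y, z} : Set S), t ∈ m → ∀ G : MvPowerSeries (Fin 3) k,
          t * f G ∈ W ⊔ (m ^ (D + 1)).restrictScalars k := by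
        intro t ht htm G
        obtain ⟨u, hu, r, hr, hsum⟩ := Submodule.mem_sup.mp (ih G)
        rw [← hsum, mul_add]
        apply add_mem
        · exact Submodule.mem_sup_left (hmulW t ht u hu)
        · apply Submodule.mem_sup_right
          show t * r ∈ m ^ (D + 1)
          rw [pow_succ']
          exact Ideal.mul_mem_mul htm hr
      have hconst : algebraMap k S c ∈ W ⊔ (m ^ (D + 1)).restrictScalars k := by
        apply Submodule.mem_sup_left
        rw [Algebra.algebraMap_eq_smul_one]
        exact Submodule.smul_mem _ c hone
      exact add_mem (add_mem (add_mem hconst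
        (hstep x (by simp) hxm G0)) (hstep y (by simp) hym G1)) (hstep z (by simp) hzm G2)
  -- the master inclusion
  have main : ∀ (n : ℕ), 0 < n → ∀ K : Ideal S, m ^ n ≤ K →
      (∀ s ∈ K, (PowerSeries.X : PowerSeries k) ^ (4 * n) ∣ g s) →
      (∀ v : ℕ, SemigroupAux.Good v → 4 * n ≤ v → SemigroupAux.Nf x y z v ∈ K) →
      intCl (m ^ n) ≤ K := by
    intro n hn K hKm hKdvd hKN
    show Ideal.span {s | IsIntegralOverIdeal (m ^ n) s} ≤ K
    rw [Ideal.span_le]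
    intro s hs
    have hs' : IsIntegralOverIdeal (m ^ n) s := hs
    have hdvd : (PowerSeries.X : PowerSeries k) ^ (4 * n) ∣ g s := hintg n s hs'
    set V : Finset ℕ := (Finset.range (4 * n)).filter SemigroupAux.Good with hV
    have hsW : s ∈ Submodule.span k ((fun v => SemigroupAux.Nf x y z v) '' ↑V)
        ⊔ K.restrictScalars k := by
      obtain ⟨F, rfl⟩ := hf s
      obtain ⟨u, hu, r, hr, hsum⟩ := Submodule.mem_sup.mp (hdec n F)
      rw [← hsum]
      refine add_mem ?_ (Submodule.mem_sup_right (hKm hr))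
      have hWle : W ≤ Submodule.span k ((fun v => SemigroupAux.Nf x y z v) '' ↑V)
          ⊔ K.restrictScalars k := by
        rw [hW, Submodule.span_le]
        rintro w ⟨a, b, c, rfl⟩
        rw [SetLike.mem_coe,
          SemigroupAux.Nf_norm x y z hz2 hy3 hx4 (5 * b + 11 * c) a b c le_rfl]
        by_cases hlt : 4 * a + 5 * b + 11 * c < 4 * n
        · apply Submodule.mem_sup_left
          apply Submodule.subset_span
          refine ⟨4 * a + 5 * b + 11 * c, ?_, rfl⟩
          simp only [hV, Finset.coe_filter, Finset.mem_range, Set.mem_setOf_eq]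
          exact ⟨hlt, SemigroupAux.good_val a b c⟩
        · exact Submodule.mem_sup_right
            (hKN _ (SemigroupAux.good_val a b c) (by omega))
      exact hWle hu
    obtain ⟨u, hu, r, hr, hsum⟩ := Submodule.mem_sup.mp hsW
    obtain ⟨c, rfl⟩ := SemigroupAux.span_image_rep (fun v => SemigroupAux.Nf x y z v) V hu
    have hrK : r ∈ K := hr
    have hczero : ∀ v₀ ∈ V, c v₀ = 0 := by
      intro v₀ hv₀
      have hv₀' := hv₀
      simp only [hV, Finset.mem_filter, Finset.mem_range] at hv₀'
      obtain ⟨hv₀r, hv₀g⟩ := hv₀'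
      have hgood : ∀ v ∈ V, g (c v • SemigroupAux.Nf x y z v)
          = PowerSeries.C (R := k) (c v) * PowerSeries.X ^ v := by
        intro v hv
        simp only [hV, Finset.mem_filter, Finset.mem_range] at hv
        rw [Algebra.smul_def, map_mul, hgC,
          SemigroupAux.map_Nf x y z g PowerSeries.X hgx hgy hgz hv.2]
      have he := congrArg g hsum
      rw [map_add, map_sum, Finset.sum_congr rfl hgood] at he
      have he2 := congrArg (PowerSeries.coeff (R := k) v₀) he
      rw [map_add, map_sum] at he2
      have hterm : ∀ v ∈ V, PowerSeries.coeff (R := k) v₀ (PowerSeries.C (R := k) (c v) * PowerSeries.X ^ v)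
          = if v₀ = v then c v else 0 := by
        intro v _
        rw [PowerSeries.coeff_C_mul, PowerSeries.coeff_X_pow]
        split <;> simp
      rw [Finset.sum_congr rfl hterm, Finset.sum_ite_eq V v₀ c, if_pos hv₀] at he2
      have hr0 : PowerSeries.coeff (R := k) v₀ (g r) = 0 :=
        PowerSeries.X_pow_dvd_iff.mp (hKdvd r hrK) v₀ hv₀r
      have hs0 : PowerSeries.coeff (R := k) v₀ (g _) = 0 :=
        PowerSeries.X_pow_dvd_iff.mp hdvd v₀ hv₀r
      rw [hr0, add_zero, hs0] at he2
      exact he2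
    have hu0 : (∑ v ∈ V, c v • SemigroupAux.Nf x y z v) = 0 :=
      Finset.sum_eq_zero fun v hv => by rw [hczero v hv, zero_smul]
    rw [← hsum, hu0, zero_add]
    exact hrK
  -- ideals are contained in their integral closures
  have self_le : ∀ I : Ideal S, I ≤ intCl I := by
    intro I u hu
    apply Ideal.subset_span
    refine ⟨1, one_pos, fun _ => -u, ?_, ?_⟩
    · intro i hi
      obtain rfl : i = 1 := by simpa using hi
      rw [pow_one]
      exact neg_mem hu
    · rw [Finset.Icc_self, Finset.sum_singleton]
      simp
  -- z is integral over m^2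
  have hz_int : z ∈ intCl (m ^ 2) := by
    apply Ideal.subset_span
    refine ⟨2, two_pos, fun i => if i = 2 then -(x ^ 3 * y ^ 2) else 0, ?_, ?_⟩
    · intro i hi
      rw [Finset.mem_Icc] at hi
      obtain ⟨hi1, hi2⟩ := hi
      interval_cases i
      · simp
      · show (if (2:ℕ) = 2 then -(x ^ 3 * y ^ 2) else 0) ∈ ((m ^ 2) ^ 2 : Ideal S)
        rw [if_pos rfl]
        apply neg_mem
        rw [show ((m ^ 2) ^ 2 : Ideal S) = m ^ 4 by rw [← pow_mul]]
        have h4 := SemigroupAux.monomial_mem_pow x y z hxm hym hzm 4 3 2 0 (by norm_num)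
        simpa using h4
    · rw [show Finset.Icc 1 2 = ({1, 2} : Finset ℕ) by decide]
      rw [Finset.sum_insert (by decide), Finset.sum_singleton]
      norm_num
      linear_combination hz2
  constructor
  · apply le_antisymm
    · apply main 2 (by norm_num) (m ^ 2 ⊔ Ideal.span {z}) le_sup_left
      · intro s hs
        obtain ⟨p, hp, q, hq, rfl⟩ := Submodule.mem_sup.mp hs
        rw [map_add]
        apply dvd_add
        · exact hgpow 2 p hp
        · obtain ⟨t, rfl⟩ := Ideal.mem_span_singleton'.mp hq
          rw [map_mul, hgz]
          exact Dvd.dvd.mul_left (pow_dvd_pow _ (by norm_num)) _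
      · intro v hv h8
        exact SemigroupAux.Nf_mem_two x y z hxm hym hzm hv (by omega)
    · apply sup_le (self_le (m ^ 2))
      rw [Ideal.span_le]
      intro w hw
      rw [Set.mem_singleton_iff] at hw
      subst hw
      exact hz_int
  · intro n hn
    apply le_antisymm
    · apply main n (by omega) (m ^ n) le_rfl
      · intro s hs
        exact hgpow n s hs
      · intro v hv hv4
        exact SemigroupAux.Nf_mem_pow x y z hxm hym hzm hy3 n hn hv hv4
    · exact self_le _
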